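/- Let G be a standard Gaussian N(0,1) random variable and let X be a real random variable independent of G with E[X] = 0 and E[|X|³] < ∞. Then for every u ≠ 0 and ε > 0, | (2√(2π) e^{u²/2}/u) · ( ℙ(G + εX ≥ u) − Ψ(u) ) − ε² E[X²] | ≤ ε³ E[|X|³] e^{u²/2}/(3|u|). In particular, the quantity ε_u := (2√(2π) e^{u²/2}/u)(C₂*(f,u) − Ψ(u)), with C₂*(f,u) = ℙ(G + εX ≥ u), has the same order of magnitude as ε² E[X²]. -/

import Mathlib

open MeasureTheory ProbabilityTheory

/-- The standard Gaussian tail function `Ψ(x) = (2π)^{-1/2} ∫_x^∞ e^{-t²/2} dt`. -/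
noncomputable def Psi (x : ℝ) : ℝ :=
  ∫ t in Set.Ioi x, (Real.sqrt (2 * Real.pi))⁻¹ * Real.exp (-t ^ 2 / 2)

namespace PerturbAux

noncomputable def phi (t : ℝ) : ℝ := (Real.sqrt (2 * Real.pi))⁻¹ * Real.exp (-t ^ 2 / 2)

lemma sqrt2pi_pos : 0 < Real.sqrt (2 * Real.pi) := Real.sqrt_pos.2 (by positivity)

lemma phi_nonneg (t : ℝ) : 0 ≤ phi t := by unfold phi; positivity

lemma phi_cont : Continuous phi := by unfold phi; fun_prop

lemma phi_eq : phi = fun t : ℝ => (Real.sqrt (2 * Real.pi))⁻¹ * Real.exp (-(1/2 : ℝ) * t ^ 2) := by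
  funext t; unfold phi; congr 1; ring

lemma phi_integrable : Integrable phi := by
  rw [phi_eq]
  exact (integrable_exp_neg_mul_sq (by norm_num : (0:ℝ) < 1/2)).const_mul _

lemma hasDerivAt_phi (t : ℝ) : HasDerivAt phi (-t * phi t) t := by
  have h1 : HasDerivAt (fun t : ℝ => -t ^ 2 / 2) (-t) t := by
    have := ((hasDerivAt_pow 2 t).neg).div_const 2
    exact this.congr_deriv (by push_cast; ring)
  have h2 := (h1.exp).const_mul (Real.sqrt (2 * Real.pi))⁻¹
  have h3 : -t * phi t = (Real.sqrt (2 * Real.pi))⁻¹ * (Real.exp (-t ^ 2 / 2) * -t) := by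
    unfold phi; ring
  rw [h3]; exact h2

lemma Psi_def (a : ℝ) : Psi a = ∫ t in Set.Ioi a, phi t := rfl

lemma Psi_eq_add (a b : ℝ) (h : a ≤ b) : Psi a = (∫ t in a..b, phi t) + Psi b := by
  rw [Psi_def, Psi_def, intervalIntegral.integral_of_le h,
    ← setIntegral_union (Set.Ioc_disjoint_Ioi le_rfl) measurableSet_Ioi
      phi_integrable.integrableOn phi_integrable.integrableOn,
    Set.Ioc_union_Ioi_eq_Ioi h]

lemma Psi_sub (a b : ℝ) : Psi a - Psi b = ∫ t in a..b, phi t := by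
  rcases le_total a b with h | h
  · rw [Psi_eq_add a b h]; ring
  · rw [Psi_eq_add b a h, intervalIntegral.integral_symm]; ring

lemma hasDerivAt_Psi (x : ℝ) : HasDerivAt Psi (-(phi x)) x := by
  have h := intervalIntegral.integral_hasDerivAt_right
    (phi_cont.intervalIntegrable 0 x)
    (phi_cont.stronglyMeasurable.stronglyMeasurableAtFilter)
    phi_cont.continuousAt
  have h2 : HasDerivAt (fun y => Psi 0 - ∫ t in (0:ℝ)..y, phi t) (-(phi x)) x := h.const_sub _
  have hfun : Psi = fun y => Psi 0 - ∫ t in (0:ℝ)..y, phi t := by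
    funext y; have := Psi_sub 0 y; linarith
  rw [hfun]; exact h2

lemma Psi_cont : Continuous Psi :=
  continuous_iff_continuousAt.2 fun x => (hasDerivAt_Psi x).continuousAt

lemma Psi_nonneg (a : ℝ) : 0 ≤ Psi a :=
  setIntegral_nonneg measurableSet_Ioi fun t _ => phi_nonneg t

lemma gaussianPDFReal_eq_phi : gaussianPDFReal 0 1 = phi := by
  funext t
  simp only [gaussianPDFReal, phi, NNReal.coe_one, mul_one, sub_zero]

lemma Psi_le_one (a : ℝ) : Psi a ≤ 1 := by
  have h1 : ∫ t, phi t = 1 := by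
    rw [← gaussianPDFReal_eq_phi]
    exact integral_gaussianPDFReal_eq_one 0 one_ne_zero
  calc Psi a ≤ ∫ t, phi t := setIntegral_le_integral phi_integrable (ae_of_all _ phi_nonneg)
  _ = 1 := h1

lemma abs_deriv_g_le (t : ℝ) : |(1 - t ^ 2) * phi t| ≤ (Real.sqrt (2 * Real.pi))⁻¹ := by
  have hE : (0:ℝ) < Real.exp (-t ^ 2 / 2) := Real.exp_pos _
  have hE1 : Real.exp (-t ^ 2 / 2) ≤ 1 := Real.exp_le_one_iff.2 (by nlinarith [sq_nonneg t])
  have h1 : Real.exp (t ^ 2 / 2) * Real.exp (-t ^ 2 / 2) = 1 := by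
    rw [← Real.exp_add]; ring_nf; exact Real.exp_zero
  have h2 : (1 + t ^ 2 / 4) ^ 2 ≤ Real.exp (t ^ 2 / 2) := by
    have ha := Real.add_one_le_exp (t ^ 2 / 4)
    have hb : (0:ℝ) ≤ t ^ 2 / 4 + 1 := by positivity
    have := mul_self_le_mul_self hb ha
    have hsq : Real.exp (t ^ 2 / 4) * Real.exp (t ^ 2 / 4) = Real.exp (t ^ 2 / 2) := by
      rw [← Real.exp_add]; ring_nf
    nlinarith
  have key : |1 - t ^ 2| * Real.exp (-t ^ 2 / 2) ≤ 1 := by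
    rcases abs_cases (1 - t ^ 2) with ⟨heq, _⟩ | ⟨heq, _⟩ <;> rw [heq]
    · nlinarith [mul_nonneg (sq_nonneg t) hE.le]
    · have h3 : t ^ 2 - 1 ≤ Real.exp (t ^ 2 / 2) := by nlinarith [sq_nonneg (t ^ 2 - 4)]
      nlinarith [mul_le_mul_of_nonneg_right h3 hE.le]
  have hc : (0:ℝ) ≤ (Real.sqrt (2 * Real.pi))⁻¹ := by positivity
  calc |(1 - t ^ 2) * phi t| = (Real.sqrt (2 * Real.pi))⁻¹ * (|1 - t ^ 2| * Real.exp (-t ^ 2 / 2)) := by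
        unfold phi; rw [abs_mul, abs_mul, abs_of_nonneg hc, abs_of_nonneg (Real.exp_nonneg _)]; ring
  _ ≤ (Real.sqrt (2 * Real.pi))⁻¹ * 1 := by
        exact mul_le_mul_of_nonneg_left key hc
  _ = _ := mul_one _

lemma hasDerivAt_g (t : ℝ) : HasDerivAt (fun t : ℝ => t * phi t) ((1 - t ^ 2) * phi t) t := by
  have := (hasDerivAt_id t).mul (hasDerivAt_phi t)
  exact this.congr_deriv (by simp only [id]; ring)

lemma g_lip (a b : ℝ) : |b * phi b - a * phi a| ≤ (Real.sqrt (2 * Real.pi))⁻¹ * |b - a| := by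
  have := Convex.norm_image_sub_le_of_norm_hasDerivWithin_le
    (f := fun t : ℝ => t * phi t) (f' := fun t : ℝ => (1 - t ^ 2) * phi t) (s := Set.univ)
    (fun x _ => (hasDerivAt_g x).hasDerivWithinAt)
    (fun x _ => by rw [Real.norm_eq_abs]; exact abs_deriv_g_le x)
    convex_univ (Set.mem_univ a) (Set.mem_univ b)
  simpa only [Real.norm_eq_abs] using this

lemma k_bound (u s : ℝ) :
    |phi (u - s) - phi u - s * (u * phi u)| ≤ s ^ 2 * ((Real.sqrt (2 * Real.pi))⁻¹ / 2) := by
  have hd : ∀ t : ℝ, HasDerivAt (fun r : ℝ => phi (u - r) - phi u - r * (u * phi u))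
      ((u - t) * phi (u - t) - u * phi u) t := by
    intro t
    have h1 : HasDerivAt (fun r : ℝ => u - r) (-1) t := by
      simpa using (hasDerivAt_id t).const_sub u
    have h2 := (hasDerivAt_phi (u - t)).comp t h1
    have h3 : HasDerivAt (fun r : ℝ => r * (u * phi u)) (u * phi u) t := by
      simpa using (hasDerivAt_id t).mul_const (u * phi u)
    have h4 := (h2.sub_const (phi u)).sub h3
    exact h4.congr_deriv (by ring)
  have hcont : Continuous (fun t : ℝ => (u - t) * phi (u - t) - u * phi u) := by
    have := phi_cont; fun_prop
  have hftc := intervalIntegral.integral_eq_sub_of_hasDerivAt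
    (fun t _ => hd t) (hcont.intervalIntegrable 0 s)
  simp only [sub_zero, mul_zero, zero_mul, sub_self] at hftc
  have hb : ∀ t : ℝ, ‖(u - t) * phi (u - t) - u * phi u‖ ≤ (Real.sqrt (2 * Real.pi))⁻¹ * |t| := by
    intro t
    have := g_lip u (u - t)
    rw [Real.norm_eq_abs]
    simpa using this
  have hgint : IntervalIntegrable (fun t : ℝ => (Real.sqrt (2 * Real.pi))⁻¹ * |t|) volume 0 s :=
    (continuous_const.mul continuous_abs).intervalIntegrable _ _
  have hle := intervalIntegral.norm_integral_le_abs_of_norm_le (ae_of_all _ fun t => hb t) hgint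
  have habs : abs (∫ t in (0:ℝ)..s, (Real.sqrt (2 * Real.pi))⁻¹ * |t|)
      = s ^ 2 * ((Real.sqrt (2 * Real.pi))⁻¹ / 2) := by
    rcases le_or_gt 0 s with hs0 | hs0
    · have he : ∫ t in (0:ℝ)..s, (Real.sqrt (2 * Real.pi))⁻¹ * |t|
          = ∫ t in (0:ℝ)..s, (Real.sqrt (2 * Real.pi))⁻¹ * t := by
        apply intervalIntegral.integral_congr
        intro t ht
        rw [Set.uIcc_of_le hs0] at ht
        dsimp only; rw [abs_of_nonneg ht.1]
      rw [he, intervalIntegral.integral_const_mul, integral_id]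
      rw [show ((s:ℝ) ^ 2 - 0 ^ 2) / 2 = s ^ 2 / 2 from by norm_num]
      rw [abs_of_nonneg (by positivity)]
      ring
    · have he : ∫ t in (0:ℝ)..s, (Real.sqrt (2 * Real.pi))⁻¹ * |t|
          = ∫ t in (0:ℝ)..s, (Real.sqrt (2 * Real.pi))⁻¹ * (-t) := by
        apply intervalIntegral.integral_congr
        intro t ht
        rw [Set.uIcc_of_ge hs0.le] at ht
        dsimp only; rw [abs_of_nonpos ht.2]
      have he2 : ∫ t in (0:ℝ)..s, (Real.sqrt (2 * Real.pi))⁻¹ * (-t)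
          = -((Real.sqrt (2 * Real.pi))⁻¹ * ((s ^ 2 - 0 ^ 2) / 2)) := by
        rw [show (fun t : ℝ => (Real.sqrt (2 * Real.pi))⁻¹ * (-t))
            = fun t : ℝ => -((Real.sqrt (2 * Real.pi))⁻¹) * t from by funext t; ring]
        rw [intervalIntegral.integral_const_mul, integral_id]
        ring
      rw [he, he2, abs_neg]
      rw [show ((s:ℝ) ^ 2 - 0 ^ 2) / 2 = s ^ 2 / 2 from by norm_num]
      rw [abs_of_nonneg (by positivity)]
      ring
    
  rw [hftc] at hle
  rw [habs] at hle
  rw [Real.norm_eq_abs] at hle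
  exact hle

lemma abs_Rrem_le (u s : ℝ) :
    |Psi (u - s) - Psi u - s * phi u - s ^ 2 * (u * phi u) / 2|
      ≤ |s| ^ 3 * ((Real.sqrt (2 * Real.pi))⁻¹ / 6) := by
  have hd : ∀ t : ℝ, HasDerivAt
      (fun r : ℝ => Psi (u - r) - Psi u - r * phi u - r ^ 2 * (u * phi u) / 2)
      (phi (u - t) - phi u - t * (u * phi u)) t := by
    intro t
    have h1 : HasDerivAt (fun r : ℝ => u - r) (-1) t := by
      simpa using (hasDerivAt_id t).const_sub u
    have h2 := (hasDerivAt_Psi (u - t)).comp t h1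
    have h3 : HasDerivAt (fun r : ℝ => r * phi u) (phi u) t := by
      simpa using (hasDerivAt_id t).mul_const (phi u)
    have h4 : HasDerivAt (fun r : ℝ => r ^ 2 * (u * phi u) / 2) (t * (u * phi u)) t := by
      have := ((hasDerivAt_pow 2 t).mul_const (u * phi u)).div_const 2
      exact this.congr_deriv (by push_cast; ring)
    have h5 := ((h2.sub_const (Psi u)).sub h3).sub h4
    exact h5.congr_deriv (by ring)
  have hcont : Continuous (fun t : ℝ => phi (u - t) - phi u - t * (u * phi u)) := by
    have := phi_cont; fun_prop
  have hftc := intervalIntegral.integral_eq_sub_of_hasDerivAt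
    (fun t _ => hd t) (hcont.intervalIntegrable 0 s)
  have hzero : Psi (u - 0) - Psi u - 0 * phi u - 0 ^ 2 * (u * phi u) / 2 = 0 := by
    simp
  rw [hzero, sub_zero] at hftc
  have hb : ∀ t : ℝ, ‖phi (u - t) - phi u - t * (u * phi u)‖
      ≤ t ^ 2 * ((Real.sqrt (2 * Real.pi))⁻¹ / 2) := fun t => by
    rw [Real.norm_eq_abs]; exact k_bound u t
  have hgint : IntervalIntegrable (fun t : ℝ => t ^ 2 * ((Real.sqrt (2 * Real.pi))⁻¹ / 2))
      volume 0 s := ((continuous_pow 2).mul continuous_const).intervalIntegrable _ _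
  have hle := intervalIntegral.norm_integral_le_abs_of_norm_le (ae_of_all _ fun t => hb t) hgint
  rw [hftc, Real.norm_eq_abs] at hle
  have habs : |∫ t in (0:ℝ)..s, t ^ 2 * ((Real.sqrt (2 * Real.pi))⁻¹ / 2)|
      = |s| ^ 3 * ((Real.sqrt (2 * Real.pi))⁻¹ / 6) := by
    rw [intervalIntegral.integral_mul_const, integral_pow]
    rw [abs_mul, abs_div, abs_of_nonneg (by positivity : (0:ℝ) ≤ (Real.sqrt (2 * Real.pi))⁻¹ / 2)]
    rw [show |s ^ (2 + 1) - 0 ^ (2 + 1)| = |s| ^ 3 from by rw [← abs_pow]; norm_num]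
    norm_num
    ring
  rw [habs] at hle
  exact hle

end PerturbAux

/-- The perturbation quantity `ε_u = (2√(2π) e^{u²/2}/u)(ℙ(G + εX ≥ u) − Ψ(u))`
equals `ε² E[X²]` up to a cubic error. -/
theorem perturbation_quantity_expansion
    {Ω : Type*} [MeasurableSpace Ω] (P : Measure Ω) [IsProbabilityMeasure P]
    (G : Ω → ℝ) (hG_meas : Measurable G)
    (hG_law : Measure.map G P = gaussianReal 0 1)
    (X : Ω → ℝ) (hX_meas : Measurable X)
    (hindep : IndepFun X G P)
    (hX_mean : ∫ ω, X ω ∂P = 0)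
    (hX3 : Integrable (fun ω => |X ω| ^ 3) P)
    (u : ℝ) (hu : u ≠ 0) (ε : ℝ) (hε : 0 < ε) :
    |(2 * Real.sqrt (2 * Real.pi) * Real.exp (u ^ 2 / 2) / u) *
        ((P {ω | u ≤ G ω + ε * X ω}).toReal - Psi u)
        - ε ^ 2 * (∫ ω, (X ω) ^ 2 ∂P)|
      ≤ ε ^ 3 * (∫ ω, |X ω| ^ 3 ∂P) * Real.exp (u ^ 2 / 2) / (3 * |u|) := by
  classical
  set c : ℝ := (Real.sqrt (2 * Real.pi))⁻¹ with hc_def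
  have hs_pos := PerturbAux.sqrt2pi_pos
  -- Step 1: express the probability as an integral of Psi
  have hS : MeasurableSet {p : ℝ × ℝ | u ≤ p.2 + ε * p.1} :=
    measurableSet_le measurable_const (measurable_snd.add (measurable_fst.const_mul ε))
  have hmap : Measure.map (fun ω => (X ω, G ω)) P
      = (Measure.map X P).prod (gaussianReal 0 1) := by
    rw [← hG_law]
    exact (indepFun_iff_map_prod_eq_prod_map_map hX_meas.aemeasurable hG_meas.aemeasurable).1
      hindep
  have h1 : P {ω | u ≤ G ω + ε * X ω}
      = ((Measure.map X P).prod (gaussianReal 0 1)) {p : ℝ × ℝ | u ≤ p.2 + ε * p.1} := by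
    rw [← hmap, Measure.map_apply (hX_meas.prodMk hG_meas) hS]
    rfl
  have h3 : ∀ x : ℝ, (gaussianReal 0 1) (Prod.mk x ⁻¹' {p : ℝ × ℝ | u ≤ p.2 + ε * p.1})
      = ENNReal.ofReal (Psi (u - ε * x)) := by
    intro x
    have hset : Prod.mk x ⁻¹' {p : ℝ × ℝ | u ≤ p.2 + ε * p.1} = Set.Ici (u - ε * x) := by
      ext y
      simp only [Set.mem_preimage, Set.mem_setOf_eq, Set.mem_Ici]
      constructor <;> intro h <;> linarith
    rw [hset, gaussianReal_apply_eq_integral 0 one_ne_zero,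
      MeasureTheory.integral_Ici_eq_integral_Ioi]
    congr 1
    rw [PerturbAux.Psi_def]
    exact setIntegral_congr_fun measurableSet_Ioi fun t _ => by
      rw [PerturbAux.gaussianPDFReal_eq_phi]
  have h2 : P {ω | u ≤ G ω + ε * X ω}
      = ∫⁻ x, ENNReal.ofReal (Psi (u - ε * x)) ∂(Measure.map X P) := by
    rw [h1, Measure.prod_apply hS]
    exact lintegral_congr fun x => h3 x
  have hcontf : Continuous (fun x : ℝ => Psi (u - ε * x)) :=
    PerturbAux.Psi_cont.comp (by fun_prop)
  have h4 : (P {ω | u ≤ G ω + ε * X ω}).toReal = ∫ ω, Psi (u - ε * X ω) ∂P := by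
    rw [h2]
    have hℓ : ∫ x, Psi (u - ε * x) ∂(Measure.map X P)
        = (∫⁻ x, ENNReal.ofReal (Psi (u - ε * x)) ∂(Measure.map X P)).toReal :=
      integral_eq_lintegral_of_nonneg_ae (ae_of_all _ fun x => PerturbAux.Psi_nonneg _)
        hcontf.aestronglyMeasurable
    rw [← hℓ, integral_map hX_meas.aemeasurable hcontf.aestronglyMeasurable]
  -- Integrability facts
  have habs1 : ∀ x : ℝ, |x| ≤ 1 + |x| ^ 3 := by
    intro x
    nlinarith [abs_nonneg x, sq_nonneg (|x| - 1), sq_nonneg (|x| + 1),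
      mul_nonneg (sq_nonneg (|x| - 1)) (abs_nonneg x)]
  have habs2 : ∀ x : ℝ, x ^ 2 ≤ 1 + |x| ^ 3 := by
    intro x
    nlinarith [abs_nonneg x, sq_abs x, sq_nonneg (|x| - 1),
      mul_nonneg (sq_nonneg (|x| - 1)) (abs_nonneg x)]
  have hXint : Integrable X P :=
    ((integrable_const 1).add hX3).mono' hX_meas.aestronglyMeasurable
      (ae_of_all _ fun ω => by simpa [Real.norm_eq_abs] using habs1 (X ω))
  have hX2int : Integrable (fun ω => (X ω) ^ 2) P :=
    ((integrable_const 1).add hX3).mono' ((hX_meas.pow_const 2).aestronglyMeasurable)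
      (ae_of_all _ fun ω => by
        rw [Real.norm_eq_abs, abs_of_nonneg (sq_nonneg _)]
        simpa using habs2 (X ω))
  have hPsiXint : Integrable (fun ω => Psi (u - ε * X ω)) P := by
    refine (integrable_const (1:ℝ)).mono'
      ((hcontf.measurable.comp hX_meas).aestronglyMeasurable) (ae_of_all _ fun ω => ?_)
    rw [Real.norm_eq_abs, abs_of_nonneg (PerturbAux.Psi_nonneg _)]
    exact PerturbAux.Psi_le_one _
  have hCint : Integrable (fun ω => ε * X ω * PerturbAux.phi u) P :=
    (hXint.const_mul ε).mul_const _
  have hDint : Integrable (fun ω => (ε * X ω) ^ 2 * (u * PerturbAux.phi u) / 2) P := by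
    have h := (hX2int.const_mul (ε ^ 2)).mul_const (u * PerturbAux.phi u / 2)
    have heq : (fun ω => (ε * X ω) ^ 2 * (u * PerturbAux.phi u) / 2)
        = fun ω => ε ^ 2 * (X ω) ^ 2 * (u * PerturbAux.phi u / 2) := by
      funext ω; ring
    rw [heq]; exact h
  -- value of the linear and quadratic integrals
  have hC : ∫ ω, ε * X ω * PerturbAux.phi u ∂P = 0 := by
    have heq : (fun ω => ε * X ω * PerturbAux.phi u)
        = fun ω => (ε * PerturbAux.phi u) * X ω := by funext ω; ring
    rw [heq, integral_const_mul, hX_mean, mul_zero]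
  have hD : ∫ ω, (ε * X ω) ^ 2 * (u * PerturbAux.phi u) / 2 ∂P
      = ε ^ 2 * (∫ ω, (X ω) ^ 2 ∂P) * (u * PerturbAux.phi u) / 2 := by
    have heq : (fun ω => (ε * X ω) ^ 2 * (u * PerturbAux.phi u) / 2)
        = fun ω => (ε ^ 2 * (u * PerturbAux.phi u) / 2) * (X ω) ^ 2 := by funext ω; ring
    rw [heq, integral_const_mul]
    ring
  -- the remainder integral
  have hf1 : Integrable (fun ω => Psi (u - ε * X ω) - Psi u) P :=
    hPsiXint.sub (integrable_const _)
  have hf2 : Integrable (fun ω => Psi (u - ε * X ω) - Psi u - ε * X ω * PerturbAux.phi u) P :=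
    hf1.sub hCint
  have eR : ∫ ω, (Psi (u - ε * X ω) - Psi u - ε * X ω * PerturbAux.phi u
        - (ε * X ω) ^ 2 * (u * PerturbAux.phi u) / 2) ∂P
      = ∫ ω, Psi (u - ε * X ω) ∂P - Psi u
        - ε ^ 2 * (∫ ω, (X ω) ^ 2 ∂P) * (u * PerturbAux.phi u) / 2 := by
    rw [integral_sub hf2 hDint, integral_sub hf1 hCint,
      integral_sub hPsiXint (integrable_const _), integral_const, hC, hD]
    simp [measure_univ]
  -- bound on the remainder integral
  have hRb : |∫ ω, (Psi (u - ε * X ω) - Psi u - ε * X ω * PerturbAux.phi u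
        - (ε * X ω) ^ 2 * (u * PerturbAux.phi u) / 2) ∂P|
      ≤ ε ^ 3 * (c / 6) * ∫ ω, |X ω| ^ 3 ∂P := by
    have hg : Integrable (fun ω => (ε ^ 3 * (c / 6)) * |X ω| ^ 3) P := hX3.const_mul _
    have hb : ∀ ω, ‖Psi (u - ε * X ω) - Psi u - ε * X ω * PerturbAux.phi u
        - (ε * X ω) ^ 2 * (u * PerturbAux.phi u) / 2‖ ≤ (ε ^ 3 * (c / 6)) * |X ω| ^ 3 := by
      intro ω
      rw [Real.norm_eq_abs]
      have h := PerturbAux.abs_Rrem_le u (ε * X ω)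
      have heq : |ε * X ω| ^ 3 * ((Real.sqrt (2 * Real.pi))⁻¹ / 6)
          = (ε ^ 3 * (c / 6)) * |X ω| ^ 3 := by
        rw [abs_mul, abs_of_pos hε, mul_pow, hc_def]; ring
      rw [heq] at h
      exact h
    have := norm_integral_le_of_norm_le hg (ae_of_all _ hb)
    rw [Real.norm_eq_abs, integral_const_mul] at this
    exact this
  -- assemble
  set M2 : ℝ := ∫ ω, (X ω) ^ 2 ∂P with hM2
  set M3 : ℝ := ∫ ω, |X ω| ^ 3 ∂P with hM3
  set I : ℝ := ∫ ω, (Psi (u - ε * X ω) - Psi u - ε * X ω * PerturbAux.phi u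
        - (ε * X ω) ^ 2 * (u * PerturbAux.phi u) / 2) ∂P with hI
  have hEphi : Real.sqrt (2 * Real.pi) * Real.exp (u ^ 2 / 2) * PerturbAux.phi u = 1 := by
    unfold PerturbAux.phi
    rw [show -u ^ 2 / 2 = -(u ^ 2 / 2) from by ring, Real.exp_neg]
    field_simp
  have hsplit : (P {ω | u ≤ G ω + ε * X ω}).toReal - Psi u
      = ε ^ 2 * M2 * (u * PerturbAux.phi u) / 2 + I := by
    rw [h4]; linarith [eR]
  rw [hsplit]
  have hmain : 2 * Real.sqrt (2 * Real.pi) * Real.exp (u ^ 2 / 2) / u *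
      (ε ^ 2 * M2 * (u * PerturbAux.phi u) / 2 + I) - ε ^ 2 * M2
      = 2 * Real.sqrt (2 * Real.pi) * Real.exp (u ^ 2 / 2) / u * I := by
    have hq : 2 * Real.sqrt (2 * Real.pi) * Real.exp (u ^ 2 / 2) / u *
        (ε ^ 2 * M2 * (u * PerturbAux.phi u) / 2)
        = (Real.sqrt (2 * Real.pi) * Real.exp (u ^ 2 / 2) * PerturbAux.phi u) * (ε ^ 2 * M2)
          * (u * u⁻¹) := by
      field_simp
    have : 2 * Real.sqrt (2 * Real.pi) * Real.exp (u ^ 2 / 2) / u *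
        (ε ^ 2 * M2 * (u * PerturbAux.phi u) / 2) = ε ^ 2 * M2 := by
      rw [hq, hEphi, mul_inv_cancel₀ hu]; ring
    linarith [this, mul_add (2 * Real.sqrt (2 * Real.pi) * Real.exp (u ^ 2 / 2) / u)
      (ε ^ 2 * M2 * (u * PerturbAux.phi u) / 2) I]
  rw [hmain, abs_mul]
  have hAbs : |2 * Real.sqrt (2 * Real.pi) * Real.exp (u ^ 2 / 2) / u|
      = 2 * Real.sqrt (2 * Real.pi) * Real.exp (u ^ 2 / 2) / |u| := by
    rw [abs_div, abs_of_pos (by positivity : (0:ℝ) < 2 * Real.sqrt (2 * Real.pi)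
      * Real.exp (u ^ 2 / 2))]
  rw [hAbs]
  have hM3nn : 0 ≤ M3 := by
    rw [hM3]
    exact integral_nonneg fun ω => by positivity
  have hu' : 0 < |u| := abs_pos.2 hu
  calc 2 * Real.sqrt (2 * Real.pi) * Real.exp (u ^ 2 / 2) / |u| * |I|
      ≤ 2 * Real.sqrt (2 * Real.pi) * Real.exp (u ^ 2 / 2) / |u| * (ε ^ 3 * (c / 6) * M3) := by
        apply mul_le_mul_of_nonneg_left hRb (by positivity)
  _ = ε ^ 3 * M3 * Real.exp (u ^ 2 / 2) / (3 * |u|)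
        * (Real.sqrt (2 * Real.pi) * (Real.sqrt (2 * Real.pi))⁻¹) := by
        rw [hc_def]; field_simp; ring
  _ = ε ^ 3 * M3 * Real.exp (u ^ 2 / 2) / (3 * |u|) := by
        rw [mul_inv_cancel₀ hs_pos.ne', mul_one]
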